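/- Let ω be a weight function satisfying ω(t) = o(t) as t → ∞, and let g : [0,∞) → [0,∞) satisfy ω(t) = o(g(t)). Then there exists a weight function σ with σ(t) = o(t), ω(t) = o(σ(t)), and σ(t) = o(g(t)). -/

import Mathlib

/-- `w₁ = o(w₂)` at infinity (for nonnegative functions): for every `ε > 0`,
`w₁(t) ≤ ε·w₂(t)` for all large `t`. -/
def LittleO (w₁ w₂ : ℝ → ℝ) : Prop := ∀ ε > 0, ∃ t₀ : ℝ, ∀ t ≥ t₀, w₁ t ≤ ε * w₂ t

/-- `w₁ = O(w₂)` at infinity (for nonnegative functions). -/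
def BigO (w₁ w₂ : ℝ → ℝ) : Prop := ∃ C > 0, ∃ t₀ : ℝ, ∀ t ≥ t₀, w₁ t ≤ C * w₂ t

/-- A weight function in the sense of Braun–Meise–Taylor: a continuous increasing
`ω : [0,∞) → [0,∞)` vanishing on `[0,1]` with `(α) ω(2t) = O(ω(t))`, `(β) ω(t) = O(t)`,
`(γ) log t = o(ω(t))` and `(δ) t ↦ ω(eᵗ)` convex. -/
structure IsWeightFunction (ω : ℝ → ℝ) : Prop where
  nonneg : ∀ t, 0 ≤ ω t
  continuous : ContinuousOn ω (Set.Ici 0)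
  mono : MonotoneOn ω (Set.Ici 0)
  eq_zero : ∀ t ∈ Set.Icc (0 : ℝ) 1, ω t = 0
  alpha : BigO (fun t => ω (2 * t)) ω
  beta : BigO ω id
  gamma : LittleO Real.log ω
  delta : ConvexOn ℝ (Set.Ici 0) (fun t => ω (Real.exp t))

/-- An auxiliary recursively defined sequence of thresholds. -/
noncomputable def bseq (c : ℝ) (r : ℕ → ℝ) : ℕ → ℝ
  | 0 => max 1 (r 0)
  | k+1 => max (c * bseq c r k) (r (k+1))

lemma bseq_ge_one {c : ℝ} (hc : 2 ≤ c) (r : ℕ → ℝ) : ∀ k, 1 ≤ bseq c r k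
  | 0 => le_max_left _ _
  | k+1 => le_trans (by nlinarith [bseq_ge_one hc r k]) (le_max_left _ _)

lemma bseq_succ {c : ℝ} (hc : 2 ≤ c) (r : ℕ → ℝ) (k : ℕ) :
    bseq c r k + 1 ≤ bseq c r (k+1) :=
  le_trans (by nlinarith [bseq_ge_one hc r k]) (le_max_left _ _)

lemma bseq_mono {c : ℝ} (hc : 2 ≤ c) (r : ℕ → ℝ) : Monotone (bseq c r) :=
  monotone_nat_of_le_succ fun k => by linarith [bseq_succ hc r k]

lemma bseq_ge_nat {c : ℝ} (hc : 2 ≤ c) (r : ℕ → ℝ) : ∀ k : ℕ, (k : ℝ) + 1 ≤ bseq c r k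
  | 0 => by simpa using bseq_ge_one hc r 0
  | k+1 => by
      have h1 := bseq_ge_nat hc r k
      have h2 := bseq_succ hc r k
      push_cast
      linarith

lemma le_bseq (c : ℝ) (r : ℕ → ℝ) : ∀ k, r k ≤ bseq c r k
  | 0 => le_max_right _ _
  | _+1 => le_max_right _ _

lemma bseq_gap (c : ℝ) (r : ℕ → ℝ) (k : ℕ) : c * bseq c r k ≤ bseq c r (k+1) :=
  le_max_left _ _

set_option maxHeartbeats 2000000 in
/-- Let `ω` be a weight function with `ω(t) = o(t)` and `g : [0,∞) → [0,∞)` with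
`ω(t) = o(g(t))`.  Then there is a weight function `σ` with `σ(t) = o(t)`,
`ω(t) = o(σ(t))` and `σ(t) = o(g(t))`. -/
theorem stmt7 (ω g : ℝ → ℝ) (hω : IsWeightFunction ω) (hβ₀ : LittleO ω id)
    (hg : ∀ t, 0 ≤ g t) (hog : LittleO ω g) :
    ∃ σ : ℝ → ℝ, IsWeightFunction σ ∧ LittleO σ id ∧ LittleO ω σ ∧ LittleO σ g := by
  classical
  obtain ⟨C, hC, Tα, hTα⟩ := hω.alpha
  choose T1 hT1 using fun k : ℕ => hβ₀ (1/((k : ℝ)+1)^3) (by positivity)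
  choose T2 hT2 using fun k : ℕ => hog (1/((k : ℝ)+1)^3) (by positivity)
  set R : ℕ → ℝ := fun k => max (max (T1 k) (T2 k)) 0 with hR
  set c : ℝ := 2*(C+1) with hcdef
  have hc : 2 ≤ c := by simp only [hcdef]; linarith
  set bb : ℕ → ℝ := bseq c (fun k => ω (R k)) with hbb
  have hb1 : ∀ k, 1 ≤ bb k := bseq_ge_one hc _
  have hbmono : Monotone bb := bseq_mono hc _
  have hbk : ∀ k : ℕ, (k : ℝ) + 1 ≤ bb k := bseq_ge_nat hc _
  have hbR : ∀ k, ω (R k) ≤ bb k := le_bseq c _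
  have hgap : ∀ k, c * bb k ≤ bb (k+1) := bseq_gap c _
  set ν : ℕ → ℝ → ℝ := fun k t => max 0 (ω t - bb k) with hν
  set σ : ℝ → ℝ := fun t => ∑' k, ν k t with hσ
  have hνnonneg : ∀ k t, 0 ≤ ν k t := fun k t => le_max_left _ _
  have hν0 : ∀ k t, ω t ≤ bb k → ν k t = 0 := fun k t h => max_eq_left (by linarith)
  have hνlb : ∀ k t, ω t - bb k ≤ ν k t := fun k t => le_max_right _ _
  have hωnn : ∀ t, 0 ≤ ω t := hω.nonneg
  have hsum : ∀ t, Summable (fun k => ν k t) := by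
    intro t
    apply summable_of_ne_finset_zero (s := Finset.range ⌈ω t⌉₊)
    intro k hk
    have hk' : (⌈ω t⌉₊ : ℝ) ≤ (k : ℝ) := by
      exact_mod_cast Nat.le_of_not_lt (fun h => hk (Finset.mem_range.mpr h))
    exact hν0 k t (le_trans (Nat.le_ceil _) (by linarith [hbk k]))
  have hσnn : ∀ t, 0 ≤ σ t := fun t => tsum_nonneg (fun k => hνnonneg k t)
  -- finite representation
  have hσfin : ∀ (u : ℝ) (K : ℕ), ω u ≤ (K : ℝ) →
      σ u = ∑ k ∈ Finset.range K, ν k u := by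
    intro u K h
    apply tsum_eq_sum
    intro k hk
    have hk' : (K : ℝ) ≤ (k : ℝ) := by
      exact_mod_cast Nat.le_of_not_lt (fun h2 => hk (Finset.mem_range.mpr h2))
    exact hν0 k u (le_trans h (by linarith [hbk k]))
  -- upper bound
  have hup' : ∀ (t : ℝ) (n : ℕ), ω t ≤ bb n → σ t ≤ (n : ℝ) * ω t := by
    intro t n h
    have h0 : 0 ≤ ω t := hωnn t
    have hGs : Summable (fun k => if k < n then ω t else 0) := by
      apply summable_of_ne_finset_zero (s := Finset.range n)
      intro k hk
      have hkn : ¬ k < n := fun h2 => hk (Finset.mem_range.mpr h2)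
      simp [if_neg hkn]
    have hle : ∀ k, ν k t ≤ (if k < n then ω t else 0) := by
      intro k
      by_cases hkn : k < n
      · simp only [if_pos hkn]
        exact max_le h0 (by linarith [hb1 k])
      · simp only [if_neg hkn]
        exact le_of_eq (hν0 k t (le_trans h (hbmono (Nat.not_lt.mp hkn))))
    calc σ t ≤ ∑' k, (if k < n then ω t else 0) := Summable.tsum_le_tsum hle (hsum t) hGs
      _ = ∑ k ∈ Finset.range n, (if k < n then ω t else 0) := by
          apply tsum_eq_sum
          intro k hk
          have hkn : ¬ k < n := fun h2 => hk (Finset.mem_range.mpr h2)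
          simp [if_neg hkn]
      _ = (n : ℝ) * ω t := by
          rw [Finset.sum_congr rfl (fun k hk => if_pos (Finset.mem_range.mp hk))]
          simp [Finset.sum_const, Finset.card_range, nsmul_eq_mul]
  -- lower bound
  have hlow : ∀ (t : ℝ) (m : ℕ), bb m ≤ ω t / 2 → ((m : ℝ)+1) * (ω t / 2) ≤ σ t := by
    intro t m hbm
    have h1 : ∀ k ∈ Finset.range (m+1), ω t / 2 ≤ ν k t := by
      intro k hk
      have hk' : k ≤ m := Nat.lt_succ_iff.mp (Finset.mem_range.mp hk)
      have h2 : bb k ≤ bb m := hbmono hk'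
      exact le_trans (by linarith) (hνlb k t)
    calc ((m : ℝ)+1) * (ω t / 2) = ∑ _k ∈ Finset.range (m+1), (ω t / 2) := by
          rw [Finset.sum_const, Finset.card_range, nsmul_eq_mul]; push_cast; ring
      _ ≤ ∑ k ∈ Finset.range (m+1), ν k t := Finset.sum_le_sum h1
      _ ≤ σ t := Summable.sum_le_tsum _ (fun k _ => hνnonneg k t) (hsum t)
  -- the key smallness estimate
  have key : ∀ (k : ℕ) (t : ℝ), 0 ≤ t → bb k < ω t →
      ω t ≤ 1/((k : ℝ)+1)^3 * t ∧ ω t ≤ 1/((k : ℝ)+1)^3 * g t := by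
    intro k t ht h
    have hRk : R k < t := by
      by_contra hle
      push_neg at hle
      have h0R : (0:ℝ) ≤ R k := le_max_right _ _
      have h2 := hω.mono (Set.mem_Ici.mpr ht) (Set.mem_Ici.mpr h0R) hle
      linarith [hbR k]
    have hRT1 : T1 k ≤ R k := le_trans (le_max_left _ _) (le_max_left _ _)
    have hRT2 : T2 k ≤ R k := le_trans (le_max_right _ _) (le_max_left _ _)
    have h1 := hT1 k t (le_of_lt (lt_of_le_of_lt hRT1 hRk))
    have h2 := hT2 k t (le_of_lt (lt_of_le_of_lt hRT2 hRk))
    exact ⟨by simpa using h1, h2⟩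
  have hexB : ∀ u : ℝ, ∃ n, ω u ≤ bb n := by
    intro u
    exact ⟨⌈ω u⌉₊, le_trans (Nat.le_ceil _) (by linarith [hbk ⌈ω u⌉₊])⟩
  -- ω → ∞
  have hωinf : ∀ M : ℝ, ∃ t₁ : ℝ, ∀ t ≥ t₁, M ≤ ω t := by
    intro M
    obtain ⟨t₁, h1⟩ := hω.gamma 1 one_pos
    refine ⟨max t₁ (Real.exp M), fun t ht => ?_⟩
    have h2 : Real.exp M ≤ t := le_trans (le_max_right _ _) ht
    have h3 : Real.log (Real.exp M) ≤ Real.log t := Real.log_le_log (Real.exp_pos M) h2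
    rw [Real.log_exp] at h3
    have h4 := h1 t (le_trans (le_max_left _ _) ht)
    linarith
  -- the main littleO transfer lemma
  have main : ∀ w : ℝ → ℝ, (∀ t, 0 ≤ t → 0 ≤ w t) → LittleO ω w →
      (∀ (k : ℕ) (t : ℝ), 0 ≤ t → bb k < ω t → ω t ≤ 1/((k : ℝ)+1)^3 * w t) →
      LittleO σ w := by
    intro w hw how hkw ε hε
    set n₀ : ℕ := ⌈1/ε⌉₊ + 1 with hn₀def
    have hn₀ : 1/ε ≤ (n₀ : ℝ) := le_trans (Nat.le_ceil _) (by rw [hn₀def]; push_cast; linarith)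
    have hn₀pos : (0:ℝ) < (n₀ : ℝ) := by positivity
    obtain ⟨T, hT⟩ := how (ε/(n₀ : ℝ)) (by positivity)
    refine ⟨max T 0, fun t ht => ?_⟩
    have ht0 : (0:ℝ) ≤ t := le_trans (le_max_right _ _) ht
    have hωt : 0 ≤ ω t := hωnn t
    have hwt : 0 ≤ w t := hw t ht0
    by_cases hcase : ω t ≤ bb n₀
    · have h1 := hup' t n₀ hcase
      have h2 := hT t (le_trans (le_max_left _ _) ht)
      calc σ t ≤ (n₀ : ℝ) * ω t := h1
        _ ≤ (n₀ : ℝ) * ((ε/(n₀ : ℝ)) * w t) := by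
            exact mul_le_mul_of_nonneg_left h2 (le_of_lt hn₀pos)
        _ = ε * w t := by field_simp
    · push_neg at hcase
      have hex := hexB t
      have hpos : 0 < Nat.find hex := by
        rcases Nat.eq_zero_or_pos (Nat.find hex) with h | h
        · exfalso
          have := Nat.find_spec hex
          rw [h] at this
          have : bb n₀ < bb 0 := lt_of_lt_of_le hcase this
          exact absurd (hbmono (Nat.zero_le n₀)) (not_le.mpr this)
        · exact h
      set n : ℕ := Nat.find hex - 1 with hndef
      have hsucc : Nat.find hex = n + 1 := (Nat.succ_pred_eq_of_pos hpos).symm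
      have hP : ω t ≤ bb (n+1) := hsucc ▸ Nat.find_spec hex
      have hbn : bb n < ω t := lt_of_not_ge (Nat.find_min hex (by omega))
      have hn₀n : n₀ ≤ n := by
        by_contra hlt
        push_neg at hlt
        have : bb (n+1) ≤ bb n₀ := hbmono (Nat.succ_le_of_lt hlt)
        linarith
      have hk1 := hkw n t ht0 hbn
      have hup := hup' t (n+1) hP
      have hn1 : 1/ε ≤ (n : ℝ) + 1 := by
        have : (n₀ : ℝ) ≤ (n : ℝ) := by exact_mod_cast hn₀n
        linarith
      have he1 : 1 ≤ ε * ((n : ℝ)+1) := by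
        rw [div_le_iff₀ hε] at hn1
        linarith
      have hnn : (0:ℝ) ≤ (n : ℝ) + 1 := by positivity
      have hA : ((n : ℝ)+1)^3 * ω t ≤ w t := by
        have hp : (0:ℝ) < ((n : ℝ)+1)^3 := by positivity
        rw [one_div] at hk1
        nlinarith [hk1, hp, mul_le_mul_of_nonneg_left hk1 hp.le,
          mul_inv_cancel₀ (ne_of_gt hp)]
      have he2 : 1 ≤ ε * ((n : ℝ)+1)^2 := by
        nlinarith [he1, mul_nonneg (mul_nonneg hε.le hnn) (Nat.cast_nonneg n : (0:ℝ) ≤ (n : ℝ))]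
      calc σ t ≤ ((n+1 : ℕ) : ℝ) * ω t := hup
        _ = ((n : ℝ)+1) * ω t := by push_cast; ring
        _ ≤ ε * w t := by nlinarith [mul_le_mul_of_nonneg_left hA hε.le,
            mul_le_mul_of_nonneg_right he2 (mul_nonneg hnn hωt)]
    -- end main
  have hid : LittleO σ id := by
    apply main id (fun t ht => ht) hβ₀
    intro k t ht h
    simpa using (key k t ht h).1
  have hog' : LittleO σ g := by
    apply main g (fun t _ => hg t) hog
    intro k t ht h
    exact (key k t ht h).2
  have hωσ : LittleO ω σ := by
    intro ε hε
    set m : ℕ := ⌈2/ε⌉₊ with hmdef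
    have hm : 2/ε ≤ (m : ℝ) := Nat.le_ceil _
    obtain ⟨t₁, ht₁⟩ := hωinf (2 * bb m)
    refine ⟨max t₁ 0, fun t ht => ?_⟩
    have h1 : 2 * bb m ≤ ω t := ht₁ t (le_trans (le_max_left _ _) ht)
    have h2 := hlow t m (by linarith)
    have hωt : 0 ≤ ω t := hωnn t
    have he : 2 ≤ ε * (m : ℝ) := by
      rw [div_le_iff₀ hε] at hm
      linarith
    nlinarith [mul_le_mul_of_nonneg_left h2 (le_of_lt hε)]
  -- alpha for σ
  have hα : BigO (fun t => σ (2*t)) σ := by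
    obtain ⟨t₂, ht₂⟩ := hωinf (2 * bb 0)
    refine ⟨4*C, by linarith, max Tα (max t₂ 0), fun t ht => ?_⟩
    have ht0 : (0:ℝ) ≤ t := le_trans (le_trans (le_max_right t₂ 0) (le_max_right Tα _)) ht
    have htα : Tα ≤ t := le_trans (le_max_left _ _) ht
    have htb : t₂ ≤ t := le_trans (le_trans (le_max_left t₂ 0) (le_max_right Tα _)) ht
    have hω2 : ω (2*t) ≤ C * ω t := hTα t htα
    have hωt0 : 0 ≤ ω t := hωnn t
    have hω2t0 : 0 ≤ ω (2*t) := hωnn (2*t)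
    have hωbig : 2 * bb 0 ≤ ω t := ht₂ t htb
    have hσt0 : ((0:ℕ) : ℝ) + 1 = 1 := by norm_num
    have hσt : 1 * (ω t/2) ≤ σ t := by
      have := hlow t 0 (by linarith)
      simpa using this
    have hσtnn : 0 ≤ σ t := hσnn t
    have hex2 := hexB (2*t)
    rcases Nat.eq_zero_or_pos (Nat.find hex2) with hf0 | hfpos
    · have hspec := Nat.find_spec hex2
      rw [hf0] at hspec
      have hσ2 : σ (2*t) ≤ ((0:ℕ) : ℝ) * ω (2*t) := hup' (2*t) 0 hspec
      simp only [Nat.cast_zero, zero_mul] at hσ2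
      nlinarith
    · set m : ℕ := Nat.find hex2 - 1 with hmdef
      have hsucc : Nat.find hex2 = m + 1 := (Nat.succ_pred_eq_of_pos hfpos).symm
      have hspec : ω (2*t) ≤ bb (m+1) := hsucc ▸ Nat.find_spec hex2
      have hm : bb m < ω (2*t) := lt_of_not_ge (Nat.find_min hex2 (by omega))
      have hσ2 : σ (2*t) ≤ ((m : ℝ)+1) * ω (2*t) := by
        have := hup' (2*t) (m+1) hspec
        calc σ (2*t) ≤ ((m+1 : ℕ) : ℝ) * ω (2*t) := this
          _ = ((m : ℝ)+1) * ω (2*t) := by push_cast; ring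
      rcases Nat.eq_zero_or_pos m with hm0 | hmpos
      · rw [hm0] at hσ2
        simp only [Nat.cast_zero] at hσ2
        nlinarith
      · set j : ℕ := m - 1 with hjdef
        have hjsucc : m = j + 1 := (Nat.succ_pred_eq_of_pos hmpos).symm
        have hgapj : c * bb j ≤ bb m := hjsucc ▸ hgap j
        have hbjm : bb m < ω (2*t) := hm
        have hbbj1 : 1 ≤ bb j := hb1 j
        have hbj : bb j ≤ ω t / 2 := by
          have h3 : c * bb j ≤ C * ω t := by linarith
          rw [hcdef] at h3
          nlinarith
        have hσtj : ((j : ℝ)+1) * (ω t/2) ≤ σ t := hlow t j hbj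
        have hmj : (m : ℝ) = (j : ℝ) + 1 := by rw [hjsucc]; push_cast; ring
        rw [hmj] at hσ2
        have hjnn : (0:ℝ) ≤ (j : ℝ) := Nat.cast_nonneg j
        nlinarith [mul_le_mul_of_nonneg_left hω2 (by linarith : (0:ℝ) ≤ (j : ℝ) + 2),
          mul_le_mul_of_nonneg_left hσtj (by linarith : (0:ℝ) ≤ 4*C),
          mul_nonneg (mul_nonneg (le_of_lt hC) hωt0) hjnn]
  -- beta for σ
  have hβσ : BigO σ id := by
    obtain ⟨T, hT⟩ := hid 1 one_pos
    exact ⟨1, one_pos, T, fun t ht => by simpa using hT t ht⟩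
  -- gamma for σ
  have hγσ : LittleO Real.log σ := by
    intro ε hε
    obtain ⟨t₁, ht₁⟩ := hω.gamma (ε/2) (by positivity)
    obtain ⟨t₂, ht₂⟩ := hωinf (2 * bb 0)
    refine ⟨max t₁ t₂, fun t ht => ?_⟩
    have h1 := ht₁ t (le_trans (le_max_left _ _) ht)
    have h2 := ht₂ t (le_trans (le_max_right _ _) ht)
    have h3 : 1 * (ω t / 2) ≤ σ t := by
      have := hlow t 0 (by linarith)
      simpa using this
    nlinarith [mul_le_mul_of_nonneg_left h3 (le_of_lt hε)]
  -- continuity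
  have hcontσ : ContinuousOn σ (Set.Ici 0) := by
    intro t₀ ht₀
    have ht₀' : (0:ℝ) ≤ t₀ := ht₀
    set K : ℕ := ⌈ω (t₀+1)⌉₊ with hKdef
    have hF : ContinuousOn (fun u => ∑ k ∈ Finset.range K, ν k u) (Set.Ici 0) := by
      apply continuousOn_finset_sum
      intro k _
      have : ContinuousOn (fun u => (0:ℝ) ⊔ (ω u - bb k)) (Set.Ici 0) :=
        ContinuousOn.sup continuousOn_const (hω.continuous.sub continuousOn_const)
      simp only [hν]
      exact this
    have hmem : Set.Ici (0:ℝ) ∩ Set.Iic (t₀+1) ∈ nhdsWithin t₀ (Set.Ici 0) :=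
      Filter.inter_mem self_mem_nhdsWithin
        (mem_nhdsWithin_of_mem_nhds (Iic_mem_nhds (by linarith)))
    have heq : ∀ u ∈ Set.Ici (0:ℝ) ∩ Set.Iic (t₀+1),
        σ u = ∑ k ∈ Finset.range K, ν k u := by
      rintro u ⟨hu0, hu1⟩
      refine hσfin u K ?_
      have := hω.mono hu0 (Set.mem_Ici.mpr (by linarith : (0:ℝ) ≤ t₀+1)) hu1
      exact le_trans this (Nat.le_ceil _)
    refine (hF t₀ ht₀).congr_of_eventuallyEq ?_ ?_
    · exact Filter.eventuallyEq_of_mem hmem heq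
    · exact heq t₀ ⟨ht₀, Set.mem_Iic.mpr (by linarith)⟩
  -- convexity
  have hconv : ∀ K : ℕ, ConvexOn ℝ (Set.Ici (0:ℝ))
      (fun s => ∑ k ∈ Finset.range K, ν k (Real.exp s)) := by
    intro K
    induction K with
    | zero => simpa using convexOn_const (0:ℝ) (convex_Ici 0)
    | succ K ih =>
        have h1 : ConvexOn ℝ (Set.Ici (0:ℝ)) (fun s => ν K (Real.exp s)) := by
          have h2 : ConvexOn ℝ (Set.Ici (0:ℝ)) (fun s => ω (Real.exp s) - bb K) :=
            hω.delta.sub (concaveOn_const _ (convex_Ici 0))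
          have h3 := (convexOn_const (0:ℝ) (convex_Ici 0)).sup h2
          simpa [hν, Pi.sup_def, max_def] using h3
        have h4 := ih.add h1
        simpa [Finset.sum_range_succ, Pi.add_def] using h4
  have hδσ : ConvexOn ℝ (Set.Ici 0) (fun s => σ (Real.exp s)) := by
    refine ⟨convex_Ici 0, ?_⟩
    intro x hx y hy a b ha hb hab
    have hx' : (0:ℝ) ≤ x := hx
    have hy' : (0:ℝ) ≤ y := hy
    set M : ℝ := max x y with hMdef
    have hxM : x ≤ M := le_max_left _ _
    have hyM : y ≤ M := le_max_right _ _
    have hM0 : (0:ℝ) ≤ M := le_trans hx' hxM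
    have hz : a • x + b • y = a * x + b * y := rfl
    have hz0 : (0:ℝ) ≤ a • x + b • y := by
      rw [hz]; exact add_nonneg (mul_nonneg ha hx') (mul_nonneg hb hy')
    have hzM : a • x + b • y ≤ M := by
      rw [hz]
      nlinarith [hxM, hyM]
    set K : ℕ := ⌈ω (Real.exp M)⌉₊ with hKdef
    have hKb : ∀ u : ℝ, 0 ≤ u → u ≤ M → ω (Real.exp u) ≤ (K : ℝ) := by
      intro u hu huM
      refine le_trans ?_ (Nat.le_ceil _)
      exact hω.mono (Set.mem_Ici.mpr (Real.exp_pos u).le)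
        (Set.mem_Ici.mpr (Real.exp_pos M).le) (Real.exp_le_exp.mpr huM)
    have e1 := hσfin (Real.exp (a • x + b • y)) K (hKb _ hz0 hzM)
    have e2 := hσfin (Real.exp x) K (hKb _ hx' hxM)
    have e3 := hσfin (Real.exp y) K (hKb _ hy' hyM)
    have hineq := (hconv K).2 hx hy ha hb hab
    simp only [smul_eq_mul] at hineq e1 e2 e3 ⊢
    calc σ (Real.exp (a*x + b*y)) = ∑ k ∈ Finset.range K, ν k (Real.exp (a*x+b*y)) := e1
      _ ≤ a * (∑ k ∈ Finset.range K, ν k (Real.exp x))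
          + b * (∑ k ∈ Finset.range K, ν k (Real.exp y)) := hineq
      _ = a * σ (Real.exp x) + b * σ (Real.exp y) := by rw [e2, e3]
  -- monotonicity
  have hmonoσ : MonotoneOn σ (Set.Ici 0) := by
    intro x hx y hy hxy
    exact Summable.tsum_le_tsum
      (fun k => max_le_max le_rfl (sub_le_sub_right (hω.mono hx hy hxy) _))
      (hsum x) (hsum y)
  -- zero on [0,1]
  have hzero : ∀ t ∈ Set.Icc (0:ℝ) 1, σ t = 0 := by
    intro t ht
    have h0 : ω t = 0 := hω.eq_zero t ht
    have hall : ∀ k, ν k t = 0 := by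
      intro k
      exact max_eq_left (by rw [h0]; linarith [hb1 k])
    calc σ t = ∑' k, ν k t := rfl
      _ = ∑' (_k : ℕ), (0:ℝ) := tsum_congr hall
      _ = 0 := tsum_zero
  exact ⟨σ, ⟨hσnn, hcontσ, hmonoσ, hzero, hα, hβσ, hγσ, hδσ⟩, hid, hωσ, hog'⟩
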